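/- Let G = (V,E) be a finite simple graph and let A be a complex matrix with rows and columns indexed by V such that A_{ij} = 1 for every pair {i,j} that is not an edge of G (including the diagonal entries A_{ii} = 1). Then α(G) ≤ σ_max(A), where σ_max(A) is the largest singular value of A, i.e. the square root of the largest eigenvalue of A*A (A* being the conjugate transpose of A). -/

import Mathlib

open Matrix in
private lemma star_dot_self {V' : Type*} [Fintype V'] (x : V' → ℂ) :
    star x ⬝ᵥ x = ((∑ i, Complex.normSq (x i) : ℝ) : ℂ) := by
  simp [dotProduct, Complex.normSq_eq_conj_mul_self]

open Matrix in
private lemma quad_le {V : Type*} [Fintype V] [DecidableEq V] [Nonempty V]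
    {M : Matrix V V ℂ} (hM : M.IsHermitian) (u : V → ℂ) :
    (star u ⬝ᵥ (M *ᵥ u)).re ≤
      (⨆ i, hM.eigenvalues i) * ∑ i, Complex.normSq (u i) := by
  set U := (hM.eigenvectorUnitary : Matrix V V ℂ) with hU
  set w := star U *ᵥ u with hwdef
  have hw : star w = star u ᵥ* U := by
    simp [hwdef, Matrix.star_mulVec, Matrix.star_eq_conjTranspose]
  have key : star u ⬝ᵥ (M *ᵥ u)
      = star w ⬝ᵥ ((Matrix.diagonal ((RCLike.ofReal : ℝ → ℂ) ∘ hM.eigenvalues)) *ᵥ w) := by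
    conv_lhs => rw [hM.spectral_theorem, Unitary.conjStarAlgAut_apply]
    rw [Matrix.mul_assoc, ← Matrix.mulVec_mulVec, Matrix.dotProduct_mulVec, ← hw,
      ← Matrix.mulVec_mulVec]
  have hnorm : ∑ i, Complex.normSq (w i) = ∑ i, Complex.normSq (u i) := by
    have h1 : star w ⬝ᵥ w = star u ⬝ᵥ u := by
      rw [hw, hwdef, ← Matrix.dotProduct_mulVec, Matrix.mulVec_mulVec,
        (Matrix.mem_unitaryGroup_iff).mp hM.eigenvectorUnitary.2, Matrix.one_mulVec]
    have := congrArg Complex.re ((star_dot_self w).symm.trans ((h1.trans (star_dot_self u))))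
    simpa using this
  have hbdd : BddAbove (Set.range hM.eigenvalues) := (Set.finite_range _).bddAbove
  have hle : ∀ i, hM.eigenvalues i ≤ ⨆ j, hM.eigenvalues j := fun i => le_ciSup hbdd i
  calc (star u ⬝ᵥ (M *ᵥ u)).re
      = ∑ i, hM.eigenvalues i * Complex.normSq (w i) := by
        rw [key]
        simp only [dotProduct, Matrix.mulVec_diagonal, Complex.re_sum]
        refine Finset.sum_congr rfl fun i _ => ?_
        have : (star w) i * (((RCLike.ofReal : ℝ → ℂ) ∘ hM.eigenvalues) i * w i)
            = (hM.eigenvalues i : ℂ) * ((starRingEnd ℂ) (w i) * w i) := by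
          simp [Pi.star_apply]; ring
        rw [this, ← Complex.normSq_eq_conj_mul_self]
        simp [Complex.ofReal_mul]
    _ ≤ ∑ i, (⨆ j, hM.eigenvalues j) * Complex.normSq (w i) := by
        refine Finset.sum_le_sum fun i _ => ?_
        exact mul_le_mul_of_nonneg_right (hle i) (Complex.normSq_nonneg _)
    _ = (⨆ j, hM.eigenvalues j) * ∑ i, Complex.normSq (w i) := by
        rw [Finset.mul_sum]
    _ = _ := by rw [hnorm]

open Matrix in
/-- Singular-value version of the Lovász bound: for a complex matrix `A` with `A i j = 1`
on all non-edges (including the diagonal), every independent set `I` of `G` satisfies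
`|I| ≤ σ_max(A) = √(λ_max(AᴴA))`. -/
theorem stmt_15 {V : Type*} [Fintype V] [DecidableEq V] [Nonempty V]
    (G : SimpleGraph V) (A : Matrix V V ℂ)
    (h1 : ∀ i j : V, ¬ G.Adj i j → A i j = 1)
    (I : Finset V) (hI : ∀ i ∈ I, ∀ j ∈ I, ¬ G.Adj i j) :
    (I.card : ℝ) ≤
      Real.sqrt (⨆ i, (Matrix.isHermitian_conjTranspose_mul_self A).eigenvalues i) := by
  rcases Finset.eq_empty_or_nonempty I with hIe | hIne
  · simp [hIe, Real.sqrt_nonneg]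
  set n : ℝ := (I.card : ℝ) with hn
  have hn1 : 1 ≤ n := Nat.one_le_cast.mpr (Finset.card_pos.mpr hIne)
  set u : V → ℂ := fun i => if i ∈ I then 1 else 0 with hu
  set v : V → ℂ := A *ᵥ u with hv
  have hvI : ∀ i ∈ I, v i = (n : ℂ) := by
    intro i hi
    have : v i = ∑ j ∈ I, A i j := by
      simp only [hv, Matrix.mulVec, dotProduct, hu]
      simp [mul_ite, Finset.sum_ite_mem]
    rw [this, Finset.sum_congr rfl fun j hj => h1 i j (hI i hi j hj)]
    simp [hn]
  have hM := Matrix.isHermitian_conjTranspose_mul_self A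
  have hquad : (dotProduct (star u) ((Aᴴ * A) *ᵥ u)).re
      = ∑ i, Complex.normSq (v i) := by
    rw [← Matrix.mulVec_mulVec, Matrix.dotProduct_mulVec]
    have : star u ᵥ* Aᴴ = star v := by rw [hv, Matrix.star_mulVec]
    rw [this, star_dot_self, Complex.ofReal_re]
  have husq : ∑ i, Complex.normSq (u i) = n := by
    simp only [hu]
    simp [apply_ite Complex.normSq, Finset.sum_ite_mem, hn]
  have hlow : n * n ^ 2 ≤ ∑ i, Complex.normSq (v i) := by
    have : ∑ i ∈ I, Complex.normSq (v i) ≤ ∑ i, Complex.normSq (v i) :=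
      Finset.sum_le_sum_of_subset_of_nonneg (Finset.subset_univ I)
        (fun i _ _ => Complex.normSq_nonneg _)
    refine le_trans ?_ this
    have : ∑ i ∈ I, Complex.normSq (v i) = n * n ^ 2 := by
      rw [Finset.sum_congr rfl fun i hi => by rw [hvI i hi]]
      rw [Finset.sum_const, nsmul_eq_mul]
      simp only [Complex.normSq_ofReal]
      rw [← hn]; ring
    rw [this]
  have hmain := quad_le hM u
  rw [hquad, husq] at hmain
  have hsq : n ^ 2 ≤ ⨆ i, hM.eigenvalues i := by
    have h := le_trans hlow hmain
    have hnpos : 0 < n := lt_of_lt_of_le one_pos hn1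
    nlinarith
  calc n = Real.sqrt (n ^ 2) := by
        rw [Real.sqrt_sq (by linarith)]
    _ ≤ _ := Real.sqrt_le_sqrt hsq
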